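/- arXiv:1609.06083 — 3 statements merged into one kernel-verified Lean document; each statement's English description precedes it below -/
import Mathlib

section
/- Let A be an expansive matrix and let ρ₁, ρ₂ be two A-homogeneous quasi-norms on ℝ^d. Then ρ₁ and ρ₂ are equivalent: there exists C ≥ 1 such that for all x ∈ ℝ^d, (1/C) ρ₁(x) ≤ ρ₂(x) ≤ C ρ₁(x). -/
open Matrix

def Expansive {n : Type*} [Fintype n] [DecidableEq n] (A : Matrix n n ℝ) : Prop :=
  IsUnit A ∧ ∀ μ ∈ spectrum ℂ (A.map Complex.ofReal), 1 < ‖μ‖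

/-- `ρ` is a quasi-norm on `ℝ^d`: Borel measurable, nonnegative, vanishing exactly at `0`,
and satisfying a quasi-triangle inequality. -/
def IsQuasiNorm {d : ℕ} (ρ : (Fin d → ℝ) → ℝ) : Prop :=
  Measurable ρ ∧ (∀ x, 0 ≤ ρ x) ∧ (∀ x, ρ x = 0 ↔ x = 0) ∧
    ∃ C > 0, ∀ x y, ρ (x + y) ≤ C * (ρ x + ρ y)

/-- `ρ` is an `A`-homogeneous quasi-norm. -/
def IsHomQuasiNorm {d : ℕ} (A : Matrix (Fin d) (Fin d) ℝ) (ρ : (Fin d → ℝ) → ℝ) : Prop :=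
  IsQuasiNorm ρ ∧ ∀ x, ρ (A.mulVec x) = |A.det| * ρ x

noncomputable section AuxHQN

open MeasureTheory Filter Topology Pointwise Polynomial
open scoped NNReal ENNReal

attribute [local instance] Matrix.linftyOpNormedAddCommGroup Matrix.linftyOpNormedRing
  Matrix.linftyOpNormedAlgebra

/-- A measurable quasi-norm is bounded on compact sets. -/
private lemma quasi_bdd {d : ℕ} {ρ : (Fin d → ℝ) → ℝ} (h : IsQuasiNorm ρ)
    {K : Set (Fin d → ℝ)} (hK : IsCompact K) : ∃ M, ∀ x ∈ K, ρ x ≤ M := by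
  obtain ⟨hmeas, hnn, hzero, C, hC, htri⟩ := h
  set σ : (Fin d → ℝ) → ℝ := fun x => ρ x + ρ (-x) with hσ
  have hσmeas : Measurable σ := hmeas.add (hmeas.comp measurable_neg)
  have hσnn : ∀ x, 0 ≤ σ x := fun x => add_nonneg (hnn x) (hnn _)
  have hρσ : ∀ x, ρ x ≤ σ x := fun x => le_add_of_nonneg_right (hnn _)
  have hσsymm : ∀ x, σ (-x) = σ x := fun x => by simp [hσ, add_comm]
  have hσtri : ∀ x y, σ (x + y) ≤ C * (σ x + σ y) := by
    intro x y
    have h1 := htri x y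
    have h2 := htri (-x) (-y)
    rw [← neg_add] at h2
    simp only [hσ]
    nlinarith
  obtain ⟨M, hM⟩ : ∃ M : ℕ,
      0 < volume {x | x ∈ Metric.closedBall (0 : Fin d → ℝ) 1 ∧ σ x ≤ M} := by
    by_contra hcon
    push_neg at hcon
    have hsub : Metric.closedBall (0 : Fin d → ℝ) 1 ⊆
        ⋃ M : ℕ, {x | x ∈ Metric.closedBall (0 : Fin d → ℝ) 1 ∧ σ x ≤ M} := by
      intro x hx
      obtain ⟨M, hM⟩ := exists_nat_ge (σ x)
      exact Set.mem_iUnion.2 ⟨M, hx, hM⟩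
    have h0 : volume (Metric.closedBall (0 : Fin d → ℝ) 1) = 0 := by
      refine le_antisymm ((measure_mono hsub).trans ((measure_iUnion_le _).trans ?_)) zero_le
      simp only [nonpos_iff_eq_zero]
      refine ENNReal.tsum_eq_zero.2 fun M => le_antisymm (hcon M) zero_le
    exact absurd h0 (Metric.measure_closedBall_pos volume 0 one_pos).ne'
  set E := {x | x ∈ Metric.closedBall (0 : Fin d → ℝ) 1 ∧ σ x ≤ M} with hE
  have hEmeas : MeasurableSet E :=
    (measurableSet_closedBall).inter (hσmeas measurableSet_Iic)
  have hnhds : E - E ∈ 𝓝 (0 : Fin d → ℝ) :=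
    MeasureTheory.Measure.sub_mem_nhds_zero_of_addHaar_pos volume E hEmeas hM
  obtain ⟨ε, hε, hball⟩ := Metric.mem_nhds_iff.1 hnhds
  have hballbd : ∀ z ∈ Metric.ball (0 : Fin d → ℝ) ε, σ z ≤ C * (2 * M) := by
    intro z hz
    obtain ⟨a, ha, b, hb, rfl⟩ := hball hz
    have : σ (a - b) ≤ C * (σ a + σ (-b)) := by
      rw [sub_eq_add_neg]; exact hσtri a (-b)
    rw [hσsymm] at this
    nlinarith [ha.2, hb.2, hσnn a, hσnn b]
  obtain ⟨t, htK, htcov⟩ := hK.elim_nhds_subcover (fun x => Metric.ball x ε)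
    (fun x _ => Metric.ball_mem_nhds x hε)
  refine ⟨C * (C * (2 * M) + ∑ x ∈ t, σ x), fun x hx => ?_⟩
  obtain ⟨i, hi, hxi⟩ := Set.mem_iUnion₂.1 (htcov hx)
  have h1 : σ (x - i) ≤ C * (2 * M) := by
    apply hballbd
    simpa [Metric.mem_ball, dist_eq_norm] using hxi
  have h2 : σ i ≤ ∑ x ∈ t, σ x := Finset.single_le_sum (fun j _ => hσnn j) hi
  have h3 : σ x ≤ C * (σ (x - i) + σ i) := by
    have := hσtri (x - i) i
    simpa using this
  calc ρ x ≤ σ x := hρσ x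
    _ ≤ C * (σ (x - i) + σ i) := h3
    _ ≤ C * (C * (2 * M) + ∑ x ∈ t, σ x) := by nlinarith

private lemma norm_ofReal_vec {d : ℕ} (z : Fin d → ℝ) :
    ‖(fun i => (z i : ℂ))‖ = ‖z‖ := by
  simp [Pi.norm_def, Pi.nnnorm_def]

private lemma map_mulVec' {d : ℕ} (M : Matrix (Fin d) (Fin d) ℝ) (y : Fin d → ℝ) :
    (M.map Complex.ofReal) *ᵥ (fun i => (y i : ℂ)) = fun i => ((M *ᵥ y) i : ℂ) := by
  funext i
  simp [Matrix.mulVec, dotProduct, Matrix.map_apply]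

/-- Powers of the inverse of an expansive matrix decay to zero, uniformly on vectors. -/
private lemma pow_decay {d : ℕ} {A : Matrix (Fin d) (Fin d) ℝ} (hA : Expansive A) :
    ∃ c : ℕ → ℝ, (∀ m, 0 ≤ c m) ∧ Tendsto c atTop (𝓝 0) ∧
      ∀ (m : ℕ) (y : Fin d → ℝ),
        ‖(↑(hA.1.unit⁻¹ ^ m) : Matrix (Fin d) (Fin d) ℝ) *ᵥ y‖ ≤ c m * ‖y‖ := by
  classical
  obtain ⟨hU, hspec⟩ := hA
  set u := hU.unit with hu
  set f : Matrix (Fin d) (Fin d) ℝ →+* Matrix (Fin d) (Fin d) ℂ :=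
    (Complex.ofRealHom).mapMatrix with hf
  set v : (Matrix (Fin d) (Fin d) ℂ)ˣ := Units.map (f : _ →* _) u with hvdef
  have hv : (v : Matrix (Fin d) (Fin d) ℂ) = A.map Complex.ofReal := by
    simp only [hvdef, hf, Units.coe_map, MonoidHom.coe_coe, RingHom.mapMatrix_apply, hu,
      IsUnit.unit_spec]
    rfl
  set B : Matrix (Fin d) (Fin d) ℂ := ↑(v⁻¹) with hB
  have hBs : ∀ μ ∈ spectrum ℂ B, ‖μ‖₊ < 1 := by
    intro μ hμ
    have hμ0 : μ ≠ 0 := by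
      rintro rfl
      exact spectrum.zero_notMem ℂ (v⁻¹).isUnit hμ
    have hmem : μ⁻¹ ∈ spectrum ℂ (v : Matrix (Fin d) (Fin d) ℂ) := by
      have := (spectrum.inv₀_mem_inv_iff (r := μ⁻¹) (a := v)).1 (by rwa [inv_inv])
      exact this
    rw [hv] at hmem
    have h1 : 1 < ‖μ⁻¹‖ := hspec _ hmem
    rw [norm_inv] at h1
    have h2 : ‖μ‖ < 1 := by
      rcases (one_lt_inv_iff₀).1 h1 with ⟨_, h⟩
      exact h
    rw [← NNReal.coe_lt_coe]
    simpa using h2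
  have hfin := Matrix.finite_spectrum B
  set s : ℝ≥0 := hfin.toFinset.sup (fun μ => ‖μ‖₊) with hs
  have hs1 : s < 1 := by
    refine (Finset.sup_lt_iff (by norm_num : (⊥ : ℝ≥0) < 1)).2 fun μ hμ => ?_
    exact hBs μ (hfin.mem_toFinset.1 hμ)
  have hrad : spectralRadius ℂ B ≤ (s : ℝ≥0∞) := by
    rw [spectralRadius]
    exact iSup₂_le fun μ hμ =>
      ENNReal.coe_le_coe.2 (Finset.le_sup (f := fun μ => ‖μ‖₊) (hfin.mem_toFinset.2 hμ))
  haveI : CompleteSpace (Matrix (Fin d) (Fin d) ℂ) := FiniteDimensional.complete ℂ _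
  have hg := spectrum.pow_nnnorm_pow_one_div_tendsto_nhds_spectralRadius B
  set t : ℝ≥0 := (s + 1) / 2 with htdef
  have hs1' : (s : ℝ) < 1 := by exact_mod_cast hs1
  have hst : s < t := by
    rw [htdef, ← NNReal.coe_lt_coe]
    push_cast
    linarith
  have ht1 : t < 1 := by
    rw [htdef, ← NNReal.coe_lt_coe]
    push_cast
    linarith
  have hev : ∀ᶠ n : ℕ in atTop, (‖B ^ n‖₊ : ℝ≥0∞) ^ (1 / (n : ℝ)) < (t : ℝ≥0∞) :=
    hg.eventually_lt_const (lt_of_le_of_lt hrad (by exact_mod_cast hst))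
  obtain ⟨N, hN⟩ := eventually_atTop.1 hev
  have key : ∀ n, N ≤ n → 1 ≤ n → ‖B ^ n‖ ≤ (t : ℝ) ^ n := by
    intro n h1 h2
    have h3 := (hN n h1).le
    have hne : (n : ℝ) ≠ 0 := Nat.cast_ne_zero.2 (by omega)
    have h4 : (((‖B ^ n‖₊ : ℝ≥0∞) ^ (1 / (n : ℝ))) ^ (n : ℝ)) ≤ ((t : ℝ≥0∞)) ^ (n : ℝ) :=
      ENNReal.rpow_le_rpow h3 (by positivity)
    rw [← ENNReal.rpow_mul, one_div_mul_cancel hne, ENNReal.rpow_one] at h4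
    rw [ENNReal.rpow_natCast, ← ENNReal.coe_pow, ENNReal.coe_le_coe] at h4
    have := NNReal.coe_le_coe.2 h4
    push_cast at this
    simpa [norm_toNNReal] using this
  refine ⟨fun m => ‖B ^ m‖, fun m => norm_nonneg _, ?_, ?_⟩
  · apply squeeze_zero' (Eventually.of_forall fun n => norm_nonneg _)
    · filter_upwards [eventually_ge_atTop N, eventually_ge_atTop 1] with n h1 h2
      exact key n h1 h2
    · exact tendsto_pow_atTop_nhds_zero_of_lt_one t.coe_nonneg (by exact_mod_cast ht1)
  · intro m y
    have hBm : B ^ m = ((↑(u⁻¹ ^ m) : Matrix (Fin d) (Fin d) ℝ)).map Complex.ofReal := by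
      have hmp : v⁻¹ ^ m = Units.map (f : _ →* _) (u⁻¹ ^ m) := by
        rw [map_pow, map_inv, hvdef]
      rw [hB, ← Units.val_pow_eq_pow_val, hmp, Units.coe_map]
      rfl
    calc ‖(↑(u⁻¹ ^ m) : Matrix (Fin d) (Fin d) ℝ) *ᵥ y‖
        = ‖(B ^ m) *ᵥ (fun i => (y i : ℂ))‖ := by
          rw [hBm, map_mulVec', norm_ofReal_vec]
      _ ≤ ‖B ^ m‖ * ‖(fun i => (y i : ℂ))‖ := Matrix.linfty_opNorm_mulVec _ _
      _ = ‖B ^ m‖ * ‖y‖ := by rw [norm_ofReal_vec]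

private lemma one_le_multiset_prod (s : Multiset ℝ) (h : ∀ x ∈ s, 1 ≤ x) : 1 ≤ s.prod := by
  induction s using Multiset.induction_on with
  | empty => simp
  | cons a t ih =>
    rw [Multiset.prod_cons]
    have h1 : 1 ≤ a := h a (Multiset.mem_cons_self a t)
    have h2 : 1 ≤ t.prod := ih fun x hx => h x (Multiset.mem_cons_of_mem hx)
    nlinarith

private lemma one_lt_multiset_prod (s : Multiset ℝ) (h : ∀ x ∈ s, 1 < x) (hs : s ≠ 0) :
    1 < s.prod := by
  induction s using Multiset.induction_on with
  | empty => exact absurd rfl hs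
  | cons a t _ =>
    rw [Multiset.prod_cons]
    have h1 : 1 < a := h a (Multiset.mem_cons_self a t)
    have h2 : 1 ≤ t.prod :=
      one_le_multiset_prod t fun x hx => (h x (Multiset.mem_cons_of_mem hx)).le
    nlinarith

private lemma root_mem_spectrum {d : ℕ} (T : Matrix (Fin d) (Fin d) ℂ) (μ : ℂ)
    (h : μ ∈ T.charpoly.roots) : μ ∈ spectrum ℂ T := by
  have heval : T.charpoly.eval μ = 0 := (Polynomial.isRoot_of_mem_roots h)
  rw [Matrix.charpoly, _root_.eval_det, matPolyEquiv_charmatrix] at heval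
  rw [spectrum.mem_iff]
  intro hunit
  rw [Matrix.isUnit_iff_isUnit_det] at hunit
  rw [Polynomial.eval_sub, Polynomial.eval_X, Polynomial.eval_C] at heval
  have halg : algebraMap ℂ (Matrix (Fin d) (Fin d) ℂ) μ = Matrix.scalar (Fin d) μ := rfl
  rw [halg, heval] at hunit
  exact (not_isUnit_zero hunit)

/-- The determinant of an expansive matrix has absolute value `> 1` (in dimension `≥ 1`). -/
private lemma det_gt {d : ℕ} (hd : 0 < d) {A : Matrix (Fin d) (Fin d) ℝ} (hA : Expansive A) :
    1 < |A.det| := by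
  set T := A.map Complex.ofReal with hT
  have hdet : (A.det : ℂ) = T.det := by
    have := RingHom.map_det Complex.ofRealHom A
    simp only [RingHom.mapMatrix_apply] at this
    exact this
  have h1 : T.det = T.charpoly.roots.prod := by
    rw [Matrix.det_eq_prod_roots_charpoly]
  have hcard : T.charpoly.roots.card = d := by
    have hsp : T.charpoly.Splits := IsAlgClosed.splits _
    rw [(Polynomial.splits_iff_card_roots).1 hsp, Matrix.charpoly_natDegree_eq_dim,
      Fintype.card_fin]
  have habs : |A.det| = ((T.charpoly.roots.map (‖·‖)).prod) := by
    have : ‖T.det‖ = (T.charpoly.roots.map (‖·‖)).prod := by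
      rw [h1]; exact map_multiset_prod (normHom : ℂ →*₀ ℝ) _
    rw [← this, ← hdet, Complex.norm_real, Real.norm_eq_abs]
  rw [habs]
  apply one_lt_multiset_prod
  · intro x hx
    obtain ⟨μ, hμ, rfl⟩ := Multiset.mem_map.1 hx
    exact hA.2 μ (root_mem_spectrum T μ hμ)
  · intro hzero
    have := congrArg Multiset.card hzero
    rw [Multiset.card_map, hcard] at this
    simp at this
    omega

/-- Homogeneity under integer powers of the matrix. -/
private lemma hom_zpow {d : ℕ} {A : Matrix (Fin d) (Fin d) ℝ} (hU : IsUnit A)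
    {ρ : (Fin d → ℝ) → ℝ} (hhom : ∀ x, ρ (A *ᵥ x) = |A.det| * ρ x) (hdet : A.det ≠ 0) :
    ∀ (j : ℤ) (x : Fin d → ℝ),
      ρ ((↑(hU.unit ^ j) : Matrix (Fin d) (Fin d) ℝ) *ᵥ x) = |A.det| ^ j * ρ x := by
  have hb : |A.det| ≠ 0 := abs_ne_zero.2 hdet
  intro j
  induction j using Int.induction_on with
  | zero => intro x; simp
  | succ n ih =>
    intro x
    have hsplit : hU.unit ^ ((n : ℤ) + 1) = hU.unit ^ (1 : ℤ) * hU.unit ^ (n : ℤ) := by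
      rw [← _root_.zpow_add]; ring_nf
    rw [hsplit, Units.val_mul, zpow_one, ← Matrix.mulVec_mulVec, hU.unit_spec, hhom, ih x,
      zpow_add_one₀ hb]
    ring
  | pred n ih =>
    intro x
    have hsplit : hU.unit ^ (-(n : ℤ)) = hU.unit ^ (1 : ℤ) * hU.unit ^ (-(n : ℤ) - 1) := by
      rw [← _root_.zpow_add]; ring_nf
    have h2 := hhom ((↑(hU.unit ^ (-(n : ℤ) - 1)) : Matrix (Fin d) (Fin d) ℝ) *ᵥ x)
    have h3 : A *ᵥ ((↑(hU.unit ^ (-(n : ℤ) - 1)) : Matrix (Fin d) (Fin d) ℝ) *ᵥ x)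
        = (↑(hU.unit ^ (-(n : ℤ))) : Matrix (Fin d) (Fin d) ℝ) *ᵥ x := by
      conv_lhs => rw [Matrix.mulVec_mulVec]
      rw [hsplit, Units.val_mul, zpow_one, hU.unit_spec]
    rw [h3, ih x] at h2
    have h4 : ρ ((↑(hU.unit ^ (-(n : ℤ) - 1)) : Matrix (Fin d) (Fin d) ℝ) *ᵥ x)
        = |A.det| ^ (-(n : ℤ)) * ρ x / |A.det| := by
      rw [eq_div_iff hb, mul_comm _ |A.det|, ← h2]
    rw [h4, zpow_sub₀ hb, zpow_one]
    ring

/-- The reference annulus. -/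
private def ann {d : ℕ} (A : Matrix (Fin d) (Fin d) ℝ) : Set (Fin d → ℝ) :=
  Metric.closedBall 0 ‖A‖ \ Metric.ball 0 1

private lemma ann_compact {d : ℕ} (A : Matrix (Fin d) (Fin d) ℝ) : IsCompact (ann A) :=
  (isCompact_closedBall 0 _).diff Metric.isOpen_ball

private lemma zpow_neg_natCast {d : ℕ} (u : (Matrix (Fin d) (Fin d) ℝ)ˣ) (m : ℕ) :
    u ^ (-(m : ℤ)) = u⁻¹ ^ m := by
  rw [_root_.zpow_neg, _root_.zpow_natCast, ← inv_pow]

/-- For every nonzero vector there is a minimal scale placing it in the annulus. -/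
private lemma scale_mem_ann {d : ℕ} {A : Matrix (Fin d) (Fin d) ℝ} (hA : Expansive A)
    (c : ℕ → ℝ) (hc0 : ∀ m, 0 ≤ c m) (hct : Tendsto c atTop (𝓝 0))
    (hcb : ∀ (m : ℕ) (y : Fin d → ℝ),
      ‖(↑(hA.1.unit⁻¹ ^ m) : Matrix (Fin d) (Fin d) ℝ) *ᵥ y‖ ≤ c m * ‖y‖)
    {y : Fin d → ℝ} (hy : y ≠ 0) :
    ∃ j : ℤ, ((↑(hA.1.unit ^ (-j)) : Matrix (Fin d) (Fin d) ℝ) *ᵥ y) ∈ ann A ∧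
      (∀ k : ℤ, ‖(↑(hA.1.unit ^ (-(k + 1))) : Matrix (Fin d) (Fin d) ℝ) *ᵥ y‖ < 1 → j ≤ k) := by
  set u := hA.1.unit with hudef
  have huA : (↑u : Matrix (Fin d) (Fin d) ℝ) = A := hA.1.unit_spec
  set P : ℤ → Prop := fun k => ‖(↑(u ^ (-(k + 1))) : Matrix (Fin d) (Fin d) ℝ) *ᵥ y‖ < 1
    with hP
  have hNorm : 0 < ‖y‖ := norm_pos_iff.2 hy
  have hne : ∃ k, P k := by
    have hev : ∀ᶠ m in atTop, c m < 1 / (‖y‖ + 1) :=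
      hct.eventually_lt_const (by positivity)
    obtain ⟨m, hm⟩ := hev.exists
    refine ⟨(m : ℤ) - 1, ?_⟩
    have harith : (-(((m : ℤ) - 1) + 1)) = -(m : ℤ) := by ring
    rw [hP]
    simp only [harith, zpow_neg_natCast]
    calc ‖(↑(u⁻¹ ^ m) : Matrix (Fin d) (Fin d) ℝ) *ᵥ y‖ ≤ c m * ‖y‖ := hcb m y
      _ < (1 / (‖y‖ + 1)) * ‖y‖ := by
          apply mul_lt_mul_of_pos_right hm hNorm
      _ < 1 := by
          rw [div_mul_eq_mul_div, div_lt_one (by positivity)]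
          linarith
  have hbdd : ∃ b : ℤ, ∀ z : ℤ, P z → b ≤ z := by
    have hev : ∀ᶠ m in atTop, c m < ‖y‖ := hct.eventually_lt_const hNorm
    obtain ⟨N, hN⟩ := eventually_atTop.1 hev
    refine ⟨-(N : ℤ) - 1, fun k hk => ?_⟩
    by_contra hcon
    push_neg at hcon
    have hk1 : (N : ℤ) ≤ -(k + 1) := by omega
    set n : ℕ := (-(k + 1)).toNat with hn
    have hnz : (n : ℤ) = -(k + 1) := Int.toNat_of_nonneg (by omega)
    have hnN : N ≤ n := by omega
    have hz : ‖(↑(u ^ ((n : ℤ))) : Matrix (Fin d) (Fin d) ℝ) *ᵥ y‖ < 1 := by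
      rw [hnz]; exact hk
    have hid : (↑(u⁻¹ ^ n) : Matrix (Fin d) (Fin d) ℝ) *ᵥ
        ((↑(u ^ ((n : ℤ))) : Matrix (Fin d) (Fin d) ℝ) *ᵥ y) = y := by
      rw [Matrix.mulVec_mulVec, ← Units.val_mul, _root_.zpow_natCast, inv_pow, inv_mul_cancel,
        Units.val_one, Matrix.one_mulVec]
    have : ‖y‖ ≤ c n := by
      calc ‖y‖ = ‖(↑(u⁻¹ ^ n) : Matrix (Fin d) (Fin d) ℝ) *ᵥ
          ((↑(u ^ ((n : ℤ))) : Matrix (Fin d) (Fin d) ℝ) *ᵥ y)‖ := by rw [hid]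
        _ ≤ c n * ‖(↑(u ^ ((n : ℤ))) : Matrix (Fin d) (Fin d) ℝ) *ᵥ y‖ := hcb n _
        _ ≤ c n * 1 := by
            apply mul_le_mul_of_nonneg_left hz.le (hc0 n)
        _ = c n := mul_one _
    exact absurd (lt_of_le_of_lt this (hN n hnN)) (lt_irrefl _)
  obtain ⟨j, hjP, hjmin⟩ := Int.exists_least_of_bdd hbdd hne
  refine ⟨j, ⟨?_, ?_⟩, fun k hk => hjmin k hk⟩
  · -- in the closed ball of radius ‖A‖
    rw [Metric.mem_closedBall, dist_zero_right]
    have hsplit : u ^ (-j) = u ^ (1 : ℤ) * u ^ (-(j + 1)) := by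
      rw [← _root_.zpow_add]; ring_nf
    rw [hsplit, Units.val_mul, zpow_one, huA, ← Matrix.mulVec_mulVec]
    calc ‖A *ᵥ ((↑(u ^ (-(j + 1))) : Matrix (Fin d) (Fin d) ℝ) *ᵥ y)‖
        ≤ ‖A‖ * ‖(↑(u ^ (-(j + 1))) : Matrix (Fin d) (Fin d) ℝ) *ᵥ y‖ :=
          Matrix.linfty_opNorm_mulVec _ _
      _ ≤ ‖A‖ * 1 := mul_le_mul_of_nonneg_left hjP.le (norm_nonneg _)
      _ = ‖A‖ := mul_one _
  · -- not in the open unit ball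
    intro hmem
    rw [Metric.mem_ball, dist_zero_right] at hmem
    have : P (j - 1) := by
      rw [hP]
      have harith : (-(j - 1 + 1)) = -j := by ring
      simp only [harith]
      exact hmem
    have := hjmin _ this
    omega

/-- A homogeneous quasi-norm is small near zero. -/
private lemma small_near_zero {d : ℕ} (hd : 0 < d) {A : Matrix (Fin d) (Fin d) ℝ}
    (hA : Expansive A) {ρ : (Fin d → ℝ) → ℝ} (h : IsHomQuasiNorm A ρ) :
    ∀ ε > 0, ∃ δ > 0, ∀ y : Fin d → ℝ, ‖y‖ < δ → ρ y ≤ ε := by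
  intro ε hε
  obtain ⟨c, hc0, hct, hcb⟩ := pow_decay hA
  obtain ⟨M, hM⟩ := quasi_bdd h.1 (ann_compact A)
  set b := |A.det| with hbdef
  have hb1 : 1 < b := det_gt hd hA
  have hb0 : (0 : ℝ) < b := lt_trans one_pos hb1
  have hbne : A.det ≠ 0 := fun hh => by simp [hbdef, hh] at hb0
  have hinv : Tendsto (fun n : ℕ => b⁻¹ ^ n * max M 1) atTop (𝓝 0) := by
    have := (tendsto_pow_atTop_nhds_zero_of_lt_one (inv_nonneg.2 hb0.le)
      (inv_lt_one_of_one_lt₀ hb1)).mul_const (max M 1)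
    simpa using this
  obtain ⟨n, hn⟩ := (hinv.eventually_lt_const hε).exists
  set k : ℤ := -(n : ℤ) with hk
  set W := (↑(hA.1.unit ^ (-(k + 1))) : Matrix (Fin d) (Fin d) ℝ) with hW
  refine ⟨1 / (‖W‖ + 1), by positivity, fun y hy => ?_⟩
  rcases eq_or_ne y 0 with rfl | hy0
  · rw [(h.1.2.2.1 0).2 rfl]; exact hε.le
  obtain ⟨j, hjmem, hjmin⟩ := scale_mem_ann hA c hc0 hct hcb hy0
  have hjk : j ≤ k := by
    apply hjmin
    rw [← hW]
    have hWn : (0 : ℝ) ≤ ‖W‖ := norm_nonneg _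
    calc ‖W *ᵥ y‖ ≤ ‖W‖ * ‖y‖ := Matrix.linfty_opNorm_mulVec _ _
      _ ≤ ‖W‖ * (1 / (‖W‖ + 1)) := mul_le_mul_of_nonneg_left hy.le hWn
      _ < 1 := by
          rw [mul_one_div, div_lt_one (by positivity)]
          linarith
  set z := (↑(hA.1.unit ^ (-j)) : Matrix (Fin d) (Fin d) ℝ) *ᵥ y with hz
  have hzM : ρ z ≤ M := hM z hjmem
  have hz0 : 0 ≤ ρ z := h.1.2.1 z
  have hy_eq : (↑(hA.1.unit ^ j) : Matrix (Fin d) (Fin d) ℝ) *ᵥ z = y := by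
    rw [hz, Matrix.mulVec_mulVec, ← Units.val_mul, ← _root_.zpow_add, add_neg_cancel, _root_.zpow_zero,
      Units.val_one, Matrix.one_mulVec]
  have e1 : ρ y = b ^ j * ρ z := by
    rw [← hy_eq, hom_zpow (ρ := ρ) hA.1 (fun x => by simpa [hbdef] using h.2 x) hbne j z]
  have hmono : b ^ j ≤ b ^ k := zpow_le_zpow_right₀ hb1.le hjk
  have hbk : b ^ k = b⁻¹ ^ n := by
    rw [hk, _root_.zpow_neg, _root_.zpow_natCast, ← inv_pow]
  calc ρ y = b ^ j * ρ z := e1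
    _ ≤ b ^ k * max M 1 := by
        apply mul_le_mul hmono (le_trans hzM (le_max_left _ _)) hz0 (zpow_pos hb0 k).le
    _ = b⁻¹ ^ n * max M 1 := by rw [hbk]
    _ ≤ ε := hn.le

/-- A homogeneous quasi-norm is bounded below on the annulus. -/
private lemma lower_bound {d : ℕ} (hd : 0 < d) {A : Matrix (Fin d) (Fin d) ℝ}
    (hA : Expansive A) {ρ : (Fin d → ℝ) → ℝ} (h : IsHomQuasiNorm A ρ) :
    ∃ c > 0, ∀ x ∈ ann A, c ≤ ρ x := by
  by_contra hcon
  push_neg at hcon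
  have hseq : ∀ n : ℕ, ∃ x, x ∈ ann A ∧ ρ x < 1 / ((n : ℝ) + 1) := by
    intro n
    obtain ⟨x, hx1, hx2⟩ := hcon (1 / ((n : ℝ) + 1)) (by positivity)
    exact ⟨x, hx1, hx2⟩
  choose x hx1 hx2 using hseq
  obtain ⟨z, hzK, φ, hφ, hconv⟩ := (ann_compact A).tendsto_subseq hx1
  obtain ⟨⟨hmeas, hnn, hzero, C, hC, htri⟩, hhom⟩ := h
  have hz : ρ z = 0 := by
    by_contra hz0
    have hzpos : 0 < ρ z := (hnn z).lt_of_ne (Ne.symm hz0)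
    set ε := ρ z / (4 * C) with hε
    have hεpos : 0 < ε := by positivity
    obtain ⟨δ, hδpos, hδ⟩ := small_near_zero hd hA
      ⟨⟨hmeas, hnn, hzero, C, hC, htri⟩, hhom⟩ ε hεpos
    have h1 : Tendsto (fun n => z - x (φ n)) atTop (𝓝 0) := by
      simpa [Function.comp] using
        ((tendsto_const_nhds : Tendsto (fun _ : ℕ => z) atTop (𝓝 z)).sub hconv)
    have h2 : ∀ᶠ n in atTop, ‖z - x (φ n)‖ < δ := by
      have hnorm : Tendsto (fun n => ‖z - x (φ n)‖) atTop (𝓝 0) := by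
        simpa using h1.norm
      exact hnorm.eventually_lt_const hδpos
    have h3 : ∀ᶠ n : ℕ in atTop, 1 / ((φ n : ℝ) + 1) ≤ ε := by
      obtain ⟨N, hN⟩ := exists_nat_gt (1 / ε)
      filter_upwards [eventually_ge_atTop N] with n hn
      have hφn : (N : ℝ) ≤ (φ n : ℝ) := by exact_mod_cast hn.trans hφ.le_apply
      have hlt : (1 : ℝ) / ε < (φ n : ℝ) + 1 := by linarith
      rw [div_le_iff₀ (by positivity)]
      rw [div_lt_iff₀ hεpos] at hlt
      linarith
    obtain ⟨n, hn1, hn2⟩ := (h2.and h3).exists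
    have htr : ρ z ≤ C * (ρ (z - x (φ n)) + ρ (x (φ n))) := by
      have := htri (z - x (φ n)) (x (φ n))
      simpa using this
    have hr1 : ρ (z - x (φ n)) ≤ ε := hδ _ hn1
    have hr2 : ρ (x (φ n)) ≤ ε := le_trans (hx2 (φ n)).le hn2
    rw [hε] at hr1 hr2
    have h4C : C * (ρ z / (4 * C) + ρ z / (4 * C)) = ρ z / 2 := by
      field_simp
      ring
    have hle : C * (ρ (z - x (φ n)) + ρ (x (φ n))) ≤ C * (ρ z / (4 * C) + ρ z / (4 * C)) :=
      mul_le_mul_of_nonneg_left (add_le_add hr1 hr2) hC.le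
    linarith
  have hz00 : z = 0 := (hzero z).1 hz
  rw [hz00] at hzK
  exact hzK.2 (by simp [Metric.mem_ball])

/-- One-sided comparison of two homogeneous quasi-norms. -/
private lemma comp_le {d : ℕ} (hd : 0 < d) (A : Matrix (Fin d) (Fin d) ℝ) (hA : Expansive A)
    (ρ₁ ρ₂ : (Fin d → ℝ) → ℝ) (h₁ : IsHomQuasiNorm A ρ₁) (h₂ : IsHomQuasiNorm A ρ₂) :
    ∃ C ≥ (1 : ℝ), ∀ x, ρ₂ x ≤ C * ρ₁ x := by
  obtain ⟨c, hc0, hct, hcb⟩ := pow_decay hA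
  obtain ⟨M₂, hM₂⟩ := quasi_bdd h₂.1 (ann_compact A)
  obtain ⟨c₁, hc₁pos, hc₁⟩ := lower_bound hd hA h₁
  set b := |A.det| with hbdef
  have hb1 : 1 < b := det_gt hd hA
  have hb0 : (0 : ℝ) < b := lt_trans one_pos hb1
  have hbne : A.det ≠ 0 := fun hh => by simp [hbdef, hh] at hb0
  refine ⟨max (M₂ / c₁) 1, le_max_right _ _, fun x => ?_⟩
  rcases eq_or_ne x 0 with rfl | hx
  · rw [(h₂.1.2.2.1 0).2 rfl, (h₁.1.2.2.1 0).2 rfl]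
    simp
  obtain ⟨j, hjmem, -⟩ := scale_mem_ann hA c hc0 hct hcb hx
  set z := (↑(hA.1.unit ^ (-j)) : Matrix (Fin d) (Fin d) ℝ) *ᵥ x with hz
  have hx_eq : (↑(hA.1.unit ^ j) : Matrix (Fin d) (Fin d) ℝ) *ᵥ z = x := by
    rw [hz, Matrix.mulVec_mulVec, ← Units.val_mul, ← _root_.zpow_add, add_neg_cancel, _root_.zpow_zero,
      Units.val_one, Matrix.one_mulVec]
  have e1 : ρ₂ x = b ^ j * ρ₂ z := by
    rw [← hx_eq, hom_zpow (ρ := ρ₂) hA.1 (fun w => by simpa [hbdef] using h₂.2 w) hbne j z]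
  have e2 : ρ₁ x = b ^ j * ρ₁ z := by
    rw [← hx_eq, hom_zpow (ρ := ρ₁) hA.1 (fun w => by simpa [hbdef] using h₁.2 w) hbne j z]
  have hbj : (0 : ℝ) < b ^ j := zpow_pos hb0 j
  have hz2 : ρ₂ z ≤ M₂ := hM₂ z hjmem
  have hz1 : c₁ ≤ ρ₁ z := hc₁ z hjmem
  have hz2nn : 0 ≤ ρ₂ z := h₂.1.2.1 z
  have hkey : ρ₂ z ≤ (M₂ / c₁) * ρ₁ z := by
    have hM₂nn : 0 ≤ M₂ := le_trans hz2nn hz2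
    calc ρ₂ z ≤ M₂ := hz2
      _ = (M₂ / c₁) * c₁ := by field_simp
      _ ≤ (M₂ / c₁) * ρ₁ z := by
          apply mul_le_mul_of_nonneg_left hz1 (by positivity)
  calc ρ₂ x = b ^ j * ρ₂ z := e1
    _ ≤ b ^ j * ((M₂ / c₁) * ρ₁ z) := mul_le_mul_of_nonneg_left hkey hbj.le
    _ = (M₂ / c₁) * (b ^ j * ρ₁ z) := by ring
    _ = (M₂ / c₁) * ρ₁ x := by rw [← e2]
    _ ≤ max (M₂ / c₁) 1 * ρ₁ x := by
        apply mul_le_mul_of_nonneg_right (le_max_left _ _)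
        rw [e2]
        exact mul_nonneg hbj.le (h₁.1.2.1 z)

end AuxHQN

/-- Any two `A`-homogeneous quasi-norms are equivalent. -/
theorem homQuasiNorm_equivalent {d : ℕ} (A : Matrix (Fin d) (Fin d) ℝ) (hA : Expansive A)
    (ρ₁ ρ₂ : (Fin d → ℝ) → ℝ) (h₁ : IsHomQuasiNorm A ρ₁) (h₂ : IsHomQuasiNorm A ρ₂) :
    ∃ C ≥ (1 : ℝ), ∀ x, (1 / C) * ρ₁ x ≤ ρ₂ x ∧ ρ₂ x ≤ C * ρ₁ x := by
  rcases Nat.eq_zero_or_pos d with rfl | hd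
  · refine ⟨1, le_refl 1, fun x => ?_⟩
    have hx : x = 0 := funext fun i => i.elim0
    rw [hx, (h₁.1.2.2.1 0).2 rfl, (h₂.1.2.2.1 0).2 rfl]
    norm_num
  obtain ⟨C₁, hC₁, h12⟩ := comp_le hd A hA ρ₁ ρ₂ h₁ h₂
  obtain ⟨C₂, hC₂, h21⟩ := comp_le hd A hA ρ₂ ρ₁ h₂ h₁
  have hCpos : (0 : ℝ) < max C₁ C₂ := lt_of_lt_of_le one_pos (le_trans hC₁ (le_max_left _ _))
  refine ⟨max C₁ C₂, le_trans hC₁ (le_max_left _ _), fun x => ⟨?_, ?_⟩⟩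
  · rw [one_div, inv_mul_le_iff₀ hCpos]
    calc ρ₁ x ≤ C₂ * ρ₂ x := h21 x
      _ ≤ max C₁ C₂ * ρ₂ x :=
        mul_le_mul_of_nonneg_right (le_max_right _ _) (h₂.1.2.1 x)
  · exact (h12 x).trans (mul_le_mul_of_nonneg_right (le_max_left _ _) (h₁.1.2.1 x))
end

section
/- Let A = [[2,2],[0,2]] and B = [[2,4],[0,2]]. Then for all k ∈ ℕ, A^{-k} B^k = [[1,k],[0,1]]. Consequently sup_{k∈ℕ} ‖A^{-k} B^k‖ = ∞, so A and B are not coarsely equivalent (even though they have identical generalized eigenspaces and ε(A,B) = 1). -/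
open Matrix

noncomputable def opNorm {n : Type*} [Fintype n] [DecidableEq n] (A : Matrix n n ℝ) : ℝ :=
  ‖Matrix.toEuclideanCLM (𝕜 := ℝ) (n := n) A‖

lemma Apow (k : ℕ) : (!![(2:ℝ), 2; 0, 2]) ^ k * !![1, (k:ℝ); 0, 1] = (!![(2:ℝ), 4; 0, 2]) ^ k := by
  induction k with
  | zero =>
    norm_num
    ext i j
    fin_cases i <;> fin_cases j <;> simp
  | succ n ih =>
    rw [pow_succ, pow_succ, ← ih]
    push_cast
    rw [mul_assoc, mul_assoc]
    have : !![(2:ℝ), 2; 0, 2] * !![1, ((n:ℝ)+1); 0, 1] = !![1, (n:ℝ); 0, 1] * !![(2:ℝ), 4; 0, 2] := by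
      simp [Matrix.mul_fin_two]; ring
    rw [this]

lemma key (k : ℕ) : (!![(2:ℝ), 2; 0, 2]) ^ (-(k : ℤ)) * (!![(2:ℝ), 4; 0, 2]) ^ (k : ℤ) =
    !![1, (k : ℝ); 0, 1] := by
  have hdet : IsUnit ((!![(2:ℝ), 2; 0, 2]) ^ k).det := by
    simp [Matrix.det_pow, Matrix.det_fin_two_of]
  rw [Matrix.zpow_neg (by simp [Matrix.det_fin_two_of] : IsUnit (!![(2:ℝ), 2; 0, 2]).det), zpow_natCast, zpow_natCast, ← Apow k]
  rw [← mul_assoc, Matrix.nonsing_inv_mul _ hdet, one_mul]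

/-- Counterexample to Bownik's Theorem (10.3): for A = [[2,2],[0,2]], B = [[2,4],[0,2]],
one has A^{-k} B^k = [[1,k],[0,1]], so the norms ‖A^{-k}B^k‖ are unbounded and A, B are
not coarsely equivalent. -/
theorem counterexample_bownik :
    (∀ k : ℕ, (!![(2:ℝ), 2; 0, 2]) ^ (-(k : ℤ)) * (!![(2:ℝ), 4; 0, 2]) ^ (k : ℤ) =
      !![1, (k : ℝ); 0, 1]) ∧
    ¬ ∃ M : ℝ, ∀ k : ℕ,
      opNorm ((!![(2:ℝ), 2; 0, 2]) ^ (-(k : ℤ)) * (!![(2:ℝ), 4; 0, 2]) ^ (k : ℤ)) ≤ M := by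
  refine ⟨key, ?_⟩
  rintro ⟨M, hM⟩
  obtain ⟨k, hk⟩ := exists_nat_gt M
  have h := hM k
  rw [key, opNorm] at h
  set f := Matrix.toEuclideanCLM (𝕜 := ℝ) (n := Fin 2) !![1, (k:ℝ); 0, 1] with hf
  set x : EuclideanSpace ℝ (Fin 2) := (WithLp.equiv 2 (Fin 2 → ℝ)).symm ![0, 1] with hxdef
  have hx : ‖x‖ = 1 := by
    rw [EuclideanSpace.norm_eq]
    simp [hxdef, Fin.sum_univ_two]
  have hfx : f x = (WithLp.equiv 2 (Fin 2 → ℝ)).symm ![(k:ℝ), 1] := by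
    rw [hxdef, hf, WithLp.equiv_symm_apply, Matrix.toEuclideanCLM_toLp]
    congr 1
    ext i
    fin_cases i <;>
      simp [Matrix.toLin'_apply, Matrix.mulVec, dotProduct, Fin.sum_univ_two]
  have h1 : (k:ℝ) ≤ ‖f x‖ := by
    rw [hfx, EuclideanSpace.norm_eq]
    rw [show (Finset.univ.sum fun i => ‖(WithLp.equiv 2 (Fin 2 → ℝ)).symm ![(k:ℝ), 1] i‖ ^ 2)
        = (k:ℝ)^2 + 1 by simp [Fin.sum_univ_two]]
    rw [Real.le_sqrt (by positivity)]
    · linarith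
    · positivity
  have h2 := f.le_opNorm x
  rw [hx, mul_one] at h2
  linarith
end

section
/- Let A, B be d×d real expansive matrices each having a single eigenvalue λ > 0 (so (A − λI)^d = 0 and (B − λI)^d = 0, λ > 1). If sup_{k∈ℕ} ‖A^{-k} B^k‖ < ∞, then A = B. -/
open Matrix

open Polynomial Finset Nat Filter

section Aux

lemma aux_entry_abs_le_opNorm {n : Type*} [Fintype n] [DecidableEq n] (M : Matrix n n ℝ)
    (i j : n) : |M i j| ≤ opNorm M := by
  set T := Matrix.toEuclideanCLM (𝕜 := ℝ) (n := n) M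
  set x : EuclideanSpace ℝ n := EuclideanSpace.single j 1
  have hx : ‖x‖ = 1 := by simp [x]
  have hTx : (T x : n → ℝ) i = M i j := by
    show (M *ᵥ (Pi.single j 1)) i = M i j
    simp [Matrix.mulVec_single]
  have h1 : |(T x : n → ℝ) i| ≤ ‖T x‖ := by
    rw [EuclideanSpace.norm_eq]
    have : |(T x : n → ℝ) i| = Real.sqrt (‖(T x : n → ℝ) i‖ ^ 2) := by
      rw [Real.sqrt_sq_eq_abs]; simp
    rw [this]
    apply Real.sqrt_le_sqrt
    exact Finset.single_le_sum (f := fun i => ‖(T x : n → ℝ) i‖ ^ 2)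
      (fun i _ => by positivity) (Finset.mem_univ i)
  calc |M i j| = |(T x : n → ℝ) i| := by rw [hTx]
    _ ≤ ‖T x‖ := h1
    _ ≤ ‖T‖ * ‖x‖ := T.le_opNorm x
    _ = opNorm M := by rw [hx, mul_one]; rfl

lemma aux_poly_bdd_const (p : ℝ[X]) (M : ℝ) (hp : ∀ k : ℕ, |p.eval (k : ℝ)| ≤ M) (k : ℕ) :
    p.eval (k : ℝ) = p.eval 0 := by
  by_cases hdeg : 0 < p.degree
  · exfalso
    have := (Polynomial.abs_tendsto_atTop p hdeg).comp (tendsto_natCast_atTop_atTop (R := ℝ))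
    obtain ⟨m, hm⟩ := (this.eventually_ge_atTop (M + 1)).exists
    have := hp m
    simp only [Function.comp] at hm
    linarith
  · have : p.natDegree = 0 := by
      rcases le_or_gt p.degree 0 with h | h
      · exact Polynomial.natDegree_eq_zero_iff_degree_le_zero.mpr h
      · exact absurd h hdeg
    obtain ⟨c, rfl⟩ := Polynomial.natDegree_eq_zero.mp this
    simp

lemma aux_charpoly_eq_of_spec {d : ℕ} (M : Matrix (Fin d) (Fin d) ℂ) (lam : ℂ)
    (hspec : ∀ μ ∈ spectrum ℂ M, μ = lam) :
    M.charpoly = (X - C lam) ^ d := by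
  have hmonic := M.charpoly_monic
  have hdeg : M.charpoly.natDegree = d := by
    rw [Matrix.charpoly_natDegree_eq_dim, Fintype.card_fin]
  have hroots : ∀ μ ∈ M.charpoly.roots, μ = lam := by
    intro μ hμ
    apply hspec
    rw [spectrum.mem_iff]
    intro hunit
    have hdet : ((Matrix.scalar (Fin d) μ) - M).det = 0 := by
      have := (Polynomial.isRoot_of_mem_roots hμ)
      rwa [Matrix.charpoly, IsRoot.def, eval_det, Matrix.matPolyEquiv_charmatrix,
        eval_sub, eval_X, eval_C] at this
    have halg : (algebraMap ℂ (Matrix (Fin d) (Fin d) ℂ)) μ = Matrix.scalar (Fin d) μ := by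
      ext i j
      simp [Matrix.algebraMap_matrix_apply, Matrix.scalar, Matrix.diagonal, Matrix.one_apply]
    rw [halg] at hunit
    have := (Matrix.isUnit_iff_isUnit_det _).mp hunit
    rw [hdet] at this
    exact not_isUnit_zero this
  have hsplits : M.charpoly.Splits := IsAlgClosed.splits _
  have hcard : Multiset.card M.charpoly.roots = d := by
    have h2 := hsplits.natDegree_eq_card_roots
    omega
  have hrepl : M.charpoly.roots = Multiset.replicate d lam :=
    Multiset.eq_replicate.mpr ⟨hcard, hroots⟩
  have := hsplits.eq_prod_roots_of_monic hmonic
  rw [hrepl, Multiset.map_replicate, Multiset.prod_replicate] at this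
  exact this

lemma aux_nilpotent_of_spec {d : ℕ} (A : Matrix (Fin d) (Fin d) ℝ) (lam : ℝ)
    (hspec : ∀ μ ∈ spectrum ℂ (A.map Complex.ofReal), μ = (lam : ℂ)) :
    (A - lam • 1) ^ d = 0 := by
  set Mc := A.map Complex.ofReal with hMc
  have hcp := aux_charpoly_eq_of_spec Mc (lam : ℂ) hspec
  have hCH := Matrix.aeval_self_charpoly Mc
  rw [hcp, map_pow, map_sub, aeval_X, aeval_C] at hCH
  set f := (Complex.ofRealHom.mapMatrix : Matrix (Fin d) (Fin d) ℝ →+* Matrix (Fin d) (Fin d) ℂ)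
    with hf
  have hinj : Function.Injective f := by
    intro X Y hXY
    ext i j
    have := congrArg (fun m => m i j) hXY
    simp only [hf, RingHom.mapMatrix_apply, Matrix.map_apply] at this
    exact Complex.ofReal_injective this
  apply hinj
  have e1 : f A = Mc := by
    ext i j
    simp [hf, RingHom.mapMatrix_apply, Matrix.map_apply, hMc]
  have e2 : f (lam • (1 : Matrix (Fin d) (Fin d) ℝ)) =
      algebraMap ℂ (Matrix (Fin d) (Fin d) ℂ) (lam : ℂ) := by
    ext i j
    simp only [hf, RingHom.mapMatrix_apply, Matrix.map_apply, Matrix.smul_apply,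
      Matrix.one_apply, Matrix.algebraMap_matrix_apply]
    split <;> simp
  rw [map_pow, map_sub, map_zero, e1, e2]
  exact hCH

lemma aux_unipotent_pow {R : Type*} [Ring R] {d : ℕ} (N : R) (hN : N ^ d = 0) (k : ℕ) :
    (1 + N) ^ k = ∑ i ∈ Finset.range d, (k.choose i) • N ^ i := by
  have hbin : (1 + N) ^ k = ∑ i ∈ Finset.range (k + 1), (k.choose i) • N ^ i := by
    rw [add_comm, (Commute.one_right N).add_pow]
    apply Finset.sum_congr rfl
    intro i hi
    rw [one_pow, mul_one, nsmul_eq_mul, (Nat.cast_commute (k.choose i) (N ^ i)).eq]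
  rw [hbin]
  calc ∑ i ∈ Finset.range (k + 1), (k.choose i) • N ^ i
      = ∑ i ∈ Finset.range (max (k + 1) d), (k.choose i) • N ^ i := by
        apply Finset.sum_subset (Finset.range_subset_range.mpr (le_max_left _ _))
        intro i hi hni
        have : k < i := by simp only [Finset.mem_range, not_lt] at hni; omega
        rw [Nat.choose_eq_zero_of_lt this, zero_smul]
    _ = ∑ i ∈ Finset.range d, (k.choose i) • N ^ i := by
        symm
        apply Finset.sum_subset (Finset.range_subset_range.mpr (le_max_right _ _))
        intro i hi hni
        have hid : d ≤ i := by simp only [Finset.mem_range, not_lt] at hni; omega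
        have : N ^ i = 0 := by
          calc N ^ i = N ^ d * N ^ (i - d) := by rw [← pow_add]; congr 1; omega
          _ = 0 := by rw [hN, zero_mul]
        rw [this, smul_zero]

lemma aux_choose_poly_eval (i k : ℕ) :
    (((i ! : ℝ)⁻¹ • descPochhammer ℝ i)).eval (k : ℝ) = (k.choose i : ℝ) := by
  rw [Polynomial.eval_smul, smul_eq_mul, descPochhammer_eval_eq_descFactorial,
    Nat.descFactorial_eq_factorial_mul_choose]
  push_cast
  rw [← mul_assoc, inv_mul_cancel₀ (by positivity), one_mul]

lemma aux_entry_formula {d : ℕ} (X Y : Matrix (Fin d) (Fin d) ℝ) (hX : X ^ d = 0)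
    (hY : Y ^ d = 0) (r s : Fin d) (k : ℕ) :
    ((1 + X) ^ k * (1 + Y) ^ k) r s
      = ∑ i ∈ Finset.range d, ∑ j ∈ Finset.range d,
          (k.choose i : ℝ) * (k.choose j : ℝ) * ((X ^ i * Y ^ j) r s) := by
  rw [aux_unipotent_pow X hX k, aux_unipotent_pow Y hY k, Finset.sum_mul_sum]
  have hterm : ∀ i j : ℕ, (k.choose i • X ^ i) * (k.choose j • Y ^ j)
      = (k.choose i * k.choose j) • (X ^ i * Y ^ j) := by
    intro i j
    rw [smul_mul_assoc, mul_smul_comm, smul_smul]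
  simp only [hterm, Matrix.sum_apply, Matrix.smul_apply]
  simp only [nsmul_eq_mul, Nat.cast_mul]

lemma aux_poly_eval_formula (d : ℕ) (c : ℕ → ℕ → ℝ) (k : ℕ) :
    (∑ i ∈ Finset.range d, ∑ j ∈ Finset.range d,
        C (c i j) * ((i ! : ℝ)⁻¹ • descPochhammer ℝ i) * ((j ! : ℝ)⁻¹ • descPochhammer ℝ j)).eval
          (k : ℝ)
      = ∑ i ∈ Finset.range d, ∑ j ∈ Finset.range d,
          (k.choose i : ℝ) * (k.choose j : ℝ) * c i j := by
  rw [Polynomial.eval_finset_sum]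
  apply Finset.sum_congr rfl; intro i _
  rw [Polynomial.eval_finset_sum]
  apply Finset.sum_congr rfl; intro j _
  rw [Polynomial.eval_mul, Polynomial.eval_mul, Polynomial.eval_C, aux_choose_poly_eval,
    aux_choose_poly_eval]
  ring

end Aux

/-- Coarsely equivalent expansive matrices with a common single positive eigenvalue are
equal. -/
theorem eq_of_coarse_equiv_single_eigenvalue {d : ℕ} (A B : Matrix (Fin d) (Fin d) ℝ)
    (hA : Expansive A) (hB : Expansive B) (lam : ℝ) (hlam : 1 < lam)
    (hAspec : ∀ μ ∈ spectrum ℂ (A.map Complex.ofReal), μ = (lam : ℂ))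
    (hBspec : ∀ μ ∈ spectrum ℂ (B.map Complex.ofReal), μ = (lam : ℂ))
    (h : ∃ M : ℝ, ∀ k : ℕ, opNorm (A ^ (-(k : ℤ)) * B ^ (k : ℤ)) ≤ M) :
    A = B := by
  rcases Nat.eq_zero_or_pos d with hd0 | hd0
  · subst hd0; ext i; exact i.elim0
  obtain ⟨M, hM⟩ := h
  have hlam0 : lam ≠ 0 := by linarith
  -- nilpotent parts
  set NA := lam⁻¹ • A - 1 with hNAdef
  set NB := lam⁻¹ • B - 1 with hNBdef
  have hNA_alt : NA = lam⁻¹ • (A - lam • 1) := by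
    rw [hNAdef, smul_sub, smul_smul, inv_mul_cancel₀ hlam0, one_smul]
  have hNB_alt : NB = lam⁻¹ • (B - lam • 1) := by
    rw [hNBdef, smul_sub, smul_smul, inv_mul_cancel₀ hlam0, one_smul]
  have hNA : NA ^ d = 0 := by
    rw [hNA_alt, _root_.smul_pow, aux_nilpotent_of_spec A lam hAspec, smul_zero]
  have hNB : NB ^ d = 0 := by
    rw [hNB_alt, _root_.smul_pow, aux_nilpotent_of_spec B lam hBspec, smul_zero]
  have hA_eq : A = lam • (1 + NA) := by
    rw [hNAdef]
    rw [add_sub_cancel, smul_smul, mul_inv_cancel₀ hlam0, one_smul]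
  have hB_eq : B = lam • (1 + NB) := by
    rw [hNBdef]
    rw [add_sub_cancel, smul_smul, mul_inv_cancel₀ hlam0, one_smul]
  -- the inverse of 1 + NA
  set Q : Matrix (Fin d) (Fin d) ℝ := ∑ i ∈ Finset.range d, (-NA) ^ i with hQdef
  have hnegNA : (-NA) ^ d = 0 := by
    rw [neg_pow, hNA, mul_zero]
  have hQ_right : Q * (1 + NA) = 1 := by
    have hgs := geom_sum_mul (-NA) d
    rw [hnegNA, zero_sub] at hgs
    have e : -NA - 1 = -(1 + NA) := by abel
    rw [e, mul_neg] at hgs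
    exact neg_injective hgs
  have hcommNAQ : Commute NA Q := by
    apply Commute.sum_right
    intro i _
    exact ((Commute.refl NA).neg_right).pow_right i
  have hQ_left : (1 + NA) * Q = 1 := by
    have hc : Commute (1 + NA) Q := (Commute.one_left Q).add_left hcommNAQ
    rw [hc.eq, hQ_right]
  -- Q = 1 + N' with N' nilpotent
  set N' := Q - 1 with hN'def
  have hQN' : Q = 1 + N' := by rw [hN'def]; abel
  have hN' : N' ^ d = 0 := by
    obtain ⟨m, rfl⟩ : ∃ m, d = m + 1 := ⟨d - 1, by omega⟩
    have hsum : N' = (-NA) * ∑ i ∈ Finset.range m, (-NA) ^ i := by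
      rw [hN'def, hQdef, Finset.sum_range_succ']
      simp only [pow_zero, _root_.pow_succ']
      rw [add_sub_cancel_right, Finset.mul_sum]
    have hcomm : Commute (-NA) (∑ i ∈ Finset.range m, (-NA) ^ i) := by
      apply Commute.sum_right
      intro i _
      exact (Commute.refl (-NA)).pow_right i
    rw [hsum, hcomm.mul_pow, hnegNA, zero_mul]
  -- key identity for the zpow products
  have hAdet : IsUnit A.det := (Matrix.isUnit_iff_isUnit_det A).mp hA.1
  have key : ∀ k : ℕ, A ^ (-(k : ℤ)) * B ^ (k : ℤ) = Q ^ k * (1 + NB) ^ k := by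
    intro k
    have hApow : A ^ k = lam ^ k • (1 + NA) ^ k := by rw [hA_eq, _root_.smul_pow]
    have hBpow : B ^ k = lam ^ k • (1 + NB) ^ k := by rw [hB_eq, _root_.smul_pow]
    have hcommQ' : Commute Q ((1 + NA)) := ((Commute.one_left Q).add_left hcommNAQ).symm
    have hinv : (A ^ k)⁻¹ = (lam ⁻¹) ^ k • Q ^ k := by
      apply Matrix.inv_eq_left_inv
      rw [hApow, smul_mul_smul_comm, ← hcommQ'.mul_pow k, hQ_right, one_pow,
        ← mul_pow, inv_mul_cancel₀ hlam0, one_pow, one_smul]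
    rw [zpow_natCast, Matrix.zpow_neg_natCast, hinv, hBpow, smul_mul_smul_comm,
      ← mul_pow, inv_mul_cancel₀ hlam0, one_pow, one_smul]
  -- each entry of Q^k (1+NB)^k is a polynomial in k; boundedness forces constancy
  have hconst : ∀ k : ℕ, Q ^ k * (1 + NB) ^ k = 1 := by
    intro k
    ext r s
    set p : Polynomial ℝ := ∑ i ∈ Finset.range d, ∑ j ∈ Finset.range d,
        C ((N' ^ i * NB ^ j) r s) * ((i ! : ℝ)⁻¹ • descPochhammer ℝ i)
          * ((j ! : ℝ)⁻¹ • descPochhammer ℝ j) with hpdef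
    have heval : ∀ m : ℕ, p.eval (m : ℝ) = (Q ^ m * (1 + NB) ^ m) r s := by
      intro m
      rw [hpdef, aux_poly_eval_formula d (fun i j => (N' ^ i * NB ^ j) r s) m, hQN',
        aux_entry_formula N' NB hN' hNB r s m]
    have hbd : ∀ m : ℕ, |p.eval (m : ℝ)| ≤ M := by
      intro m
      rw [heval m, ← key m]
      exact le_trans (aux_entry_abs_le_opNorm _ r s) (hM m)
    have h0 : p.eval ((0 : ℕ) : ℝ) = (1 : Matrix (Fin d) (Fin d) ℝ) r s := by
      rw [heval 0]; simp
    have := aux_poly_bdd_const p M hbd k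
    rw [heval k] at this
    rw [this]
    rw [show ((0 : ℝ) = ((0 : ℕ) : ℝ)) by norm_num] at *
    rw [← h0]
  -- conclude at k = 1
  have h1 : Q * (1 + NB) = 1 := by
    have := hconst 1
    rwa [pow_one, pow_one] at this
  have h2 : (1 + NB) = (1 + NA) := by
    have := congrArg (fun X => (1 + NA) * X) h1
    rw [← mul_assoc, hQ_left, one_mul, mul_one] at this
    exact this
  rw [hA_eq, hB_eq, h2]
end
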